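/- Let k be a field of characteristic p > 0 and B a finite-dimensional commutative k-algebra with a k-algebra homomorphism π : B → k such that x^p = 0 for every x ∈ ker π. Let k ⊆ K ⊆ L and k ⊆ K ⊆ M be towers of fields, let Ω be an algebraically closed field extension of L, and suppose: ∂ : K → L ⊗_k B is a B-operator; c : M → Ω ⊗_k B is a B-operator and b : M → L is a K-algebra homomorphism (i.e. b|_K = ∂₀) such that c|_K = ι ∘ ∂ (where ι : L ⊗_k B → Ω ⊗_k B is induced by L ⊆ Ω) and (id_Ω ⊗ π) ∘ c equals the composition of b with the inclusion L ⊆ Ω. Then there exists a B-operator c' : M → L ⊗_k B such that c'|_K = ∂ and (id_L ⊗ π) ∘ c' = b. -/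

import Mathlib

open TensorProduct

/-- The underlying homomorphism extractor `∂₀ = (id_T ⊗ π) ∘ ∂` of a `B`-operator:
the algebra map `T ⊗[k] B → T` induced by `π : B → k` and `T ⊗[k] k ≅ T`. -/
noncomputable def BOp.counit (k T B : Type*) [CommSemiring k] [CommSemiring T] [Algebra k T]
    [CommSemiring B] [Algebra k B] (π : B →ₐ[k] k) : T ⊗[k] B →ₐ[k] T :=
  (Algebra.TensorProduct.rid k k T).toAlgHom.comp
    (Algebra.TensorProduct.map (AlgHom.id k T) π)

section Aux

variable {k B : Type*} [Field k] [CommRing B] [Algebra k B] (π : B →ₐ[k] k)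

@[simp] lemma BOp.counit_tmul (T : Type*) [CommRing T] [Algebra k T] (t : T) (b : B) :
    BOp.counit k T B π (t ⊗ₜ[k] b) = π b • t := rfl

lemma BOp.counit_map {T T' : Type*} [CommRing T] [Algebra k T] [CommRing T'] [Algebra k T']
    (f : T →ₐ[k] T') (a : T ⊗[k] B) :
    BOp.counit k T' B π (Algebra.TensorProduct.map f (AlgHom.id k B) a)
      = f (BOp.counit k T B π a) := by
  induction a using TensorProduct.induction_on with
  | zero => simp
  | tmul t b => simp [Algebra.TensorProduct.map_tmul, map_smul]
  | add x y hx hy => simp [map_add, hx, hy]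

lemma BOp.pow_char (p : ℕ) [Fact p.Prime] [CharP k p]
    (hπ : ∀ x ∈ RingHom.ker π, x ^ p = 0)
    (T : Type*) [CommRing T] [Algebra k T] [Nontrivial T] (a : T ⊗[k] B) :
    a ^ p = (BOp.counit k T B π a ^ p) ⊗ₜ[k] (1 : B) := by
  haveI : Nontrivial (T ⊗[k] B) := (BOp.counit k T B π).toRingHom.domain_nontrivial
  haveI : CharP (T ⊗[k] B) p := charP_of_injective_algebraMap' k p
  have key : ∀ x : T ⊗[k] B, (x - (BOp.counit k T B π x) ⊗ₜ[k] (1 : B)) ^ p = 0 := by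
    intro x
    induction x using TensorProduct.induction_on with
    | zero => simp [zero_pow (Nat.Prime.ne_zero Fact.out)]
    | tmul t b =>
      have h1 : ((π b • t) ⊗ₜ[k] (1 : B) : T ⊗[k] B) = t ⊗ₜ[k] (algebraMap k B (π b)) := by
        rw [smul_tmul, Algebra.algebraMap_eq_smul_one]
      have h2 : π (b - algebraMap k B (π b)) = 0 := by simp
      rw [BOp.counit_tmul, h1, ← TensorProduct.tmul_sub,
        Algebra.TensorProduct.tmul_pow, hπ _ h2, tmul_zero]
    | add x y hx hy =>
      have h3 : x + y - (BOp.counit k T B π (x + y)) ⊗ₜ[k] (1 : B)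
          = (x - (BOp.counit k T B π x) ⊗ₜ[k] (1 : B))
            + (y - (BOp.counit k T B π y) ⊗ₜ[k] (1 : B)) := by
        rw [map_add, TensorProduct.add_tmul]; ring
      rw [h3, add_pow_char, hx, hy, add_zero]
  have h4 := key a
  have h5 : a = (a - (BOp.counit k T B π a) ⊗ₜ[k] (1 : B))
      + (BOp.counit k T B π a) ⊗ₜ[k] (1 : B) := by ring
  calc a ^ p = ((a - (BOp.counit k T B π a) ⊗ₜ[k] (1 : B))
      + (BOp.counit k T B π a) ⊗ₜ[k] (1 : B)) ^ p := by rw [← h5]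
    _ = (BOp.counit k T B π a ^ p) ⊗ₜ[k] (1 : B) := by
        rw [add_pow_char, h4, zero_add, Algebra.TensorProduct.tmul_pow, one_pow]

end Aux

set_option maxHeartbeats 1000000 in
set_option synthInstance.maxHeartbeats 400000 in
/-- (Proposition 2.8.) Let `k` have characteristic `p > 0` and let `B` be a finite-dimensional
commutative `k`-algebra with `π : B → k` such that `x ^ p = 0` for all `x ∈ ker π`. Let
`k ⊆ K ⊆ L`, `k ⊆ K ⊆ M` be towers of fields, `Ω` an algebraically closed field extension of
`L`, `δ : K → L ⊗[k] B` a `B`-operator (with `δ₀` the inclusion `K ⊆ L`), and suppose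
`c : M → Ω ⊗[k] B` is a `B`-operator and `b : M → L` a `K`-algebra map such that `c|_K = ι ∘ δ`
and `(id_Ω ⊗ π) ∘ c = (L ⊆ Ω) ∘ b`. Then there is a `B`-operator `c' : M → L ⊗[k] B` with
`c'|_K = δ` and `(id_L ⊗ π) ∘ c' = b`. -/
theorem BOperator.descend_to_L
    (p : ℕ) [Fact p.Prime] (k : Type*) [Field k] [CharP k p]
    (B : Type*) [CommRing B] [Algebra k B] [FiniteDimensional k B] (π : B →ₐ[k] k)
    (hπ : ∀ x ∈ RingHom.ker π, x ^ p = 0)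
    (K L M Ω : Type*) [Field K] [Field L] [Field M] [Field Ω]
    [Algebra k K] [Algebra k L] [Algebra k M] [Algebra k Ω]
    [Algebra K L] [IsScalarTower k K L] [Algebra K M] [IsScalarTower k K M]
    [Algebra L Ω] [IsScalarTower k L Ω] [IsAlgClosed Ω]
    (δ : K →ₐ[k] L ⊗[k] B)
    (hδ0 : (BOp.counit k L B π).comp δ = IsScalarTower.toAlgHom k K L)
    (c : M →ₐ[k] Ω ⊗[k] B) (b : M →ₐ[K] L)
    (hcK : c.comp (IsScalarTower.toAlgHom k K M) =
      (Algebra.TensorProduct.map (IsScalarTower.toAlgHom k L Ω) (AlgHom.id k B)).comp δ)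
    (hcb : (BOp.counit k Ω B π).comp c =
      (IsScalarTower.toAlgHom k L Ω).comp (b.restrictScalars k)) :
    ∃ c' : M →ₐ[k] L ⊗[k] B,
      c'.comp (IsScalarTower.toAlgHom k K M) = δ ∧
        (BOp.counit k L B π).comp c' = b.restrictScalars k := by
  classical
  set A := L ⊗[k] B with hA
  set ι : L ⊗[k] B →ₐ[k] Ω ⊗[k] B :=
    Algebra.TensorProduct.map (IsScalarTower.toAlgHom k L Ω) (AlgHom.id k B) with hιdef
  set cu : A →ₐ[k] L := BOp.counit k L B π with hcu
  set cuΩ : Ω ⊗[k] B →ₐ[k] Ω := BOp.counit k Ω B π with hcuΩ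
  -- injectivity of ι
  have hι_inj : Function.Injective ι := by
    obtain ⟨g, hg⟩ := (IsScalarTower.toAlgHom k L Ω).toLinearMap.exists_leftInverse_of_injective
      (LinearMap.ker_eq_bot.mpr (by
        intro x y h
        exact (algebraMap L Ω).injective (by simpa using h)))
    have hG : ∀ a : A, TensorProduct.map g LinearMap.id (ι a) = a := by
      intro a
      induction a using TensorProduct.induction_on with
      | zero => simp
      | tmul t d =>
        have := LinearMap.congr_fun hg t
        simpa [hιdef, Algebra.TensorProduct.map_tmul, TensorProduct.map_tmul] using
          congrArg (· ⊗ₜ[k] d) this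
      | add x y hx hy => simp only [map_add, hx, hy]
    intro x y hxy
    rw [← hG x, ← hG y, hxy]
  -- counit naturality
  have cu_nat : ∀ a : A, cuΩ (ι a) = algebraMap L Ω (cu a) := fun a => by
    simpa using BOp.counit_map π (IsScalarTower.toAlgHom k L Ω) a
  have hcb' : ∀ m : M, cuΩ (c m) = algebraMap L Ω (b m) := fun m => by
    simpa using AlgHom.congr_fun hcb m
  have powΩ : ∀ a : Ω ⊗[k] B, a ^ p = (cuΩ a ^ p) ⊗ₜ[k] (1 : B) :=
    BOp.pow_char π p hπ Ω
  have hcmp : ∀ m : M, c (m ^ p) = ι ((b m ^ p) ⊗ₜ[k] (1 : B)) := fun m => by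
    rw [map_pow, powΩ, hcb']
    simp [hιdef, Algebra.TensorProduct.map_tmul, map_pow]
  -- the base graph
  set Γ₀ : Subalgebra k (M × A) :=
    AlgHom.equalizer (c.comp (AlgHom.fst k M A)) (ι.comp (AlgHom.snd k M A)) with hΓ₀def
  have mem_Γ₀ : ∀ z : M × A, z ∈ Γ₀ ↔ c z.1 = ι z.2 := fun z => Iff.rfl
  have hK0 : ∀ x : K, (algebraMap K M x, δ x) ∈ Γ₀ := fun x => by
    rw [mem_Γ₀]
    simpa using AlgHom.congr_fun hcK x
  have hp0 : ∀ m : M, (m ^ p, (b m ^ p) ⊗ₜ[k] (1 : B)) ∈ Γ₀ := fun m => by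
    rw [mem_Γ₀]; exact hcmp m
  -- the family of admissible graphs
  set S : Set (Subalgebra k (M × A)) :=
    {Γ | Γ₀ ≤ Γ ∧ ∀ z ∈ Γ, (z.1 = (0 : M) → z.2 = 0) ∧ cu z.2 = b z.1} with hSdef
  have hΓ₀S : Γ₀ ∈ S := by
    refine ⟨le_rfl, fun z hz => ?_⟩
    have hz' : c z.1 = ι z.2 := hz
    constructor
    · intro h0
      apply hι_inj
      rw [← hz', h0, map_zero, map_zero]
    · apply (algebraMap L Ω).injective
      have : cuΩ (c z.1) = cuΩ (ι z.2) := by rw [hz']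
      rw [cu_nat, hcb'] at this
      exact this.symm
  -- Zorn
  obtain ⟨Γ, hΓ₀Γ, hΓmax⟩ := zorn_le_nonempty₀ S (by
    intro C hCS hchain y hy
    refine ⟨sSup C, ⟨le_trans (hCS hy).1 (le_sSup hy), ?_⟩, fun z hz => le_sSup hz⟩
    intro z hz
    haveI : Nonempty C := ⟨⟨y, hy⟩⟩
    have hdir : Directed (· ≤ ·) (fun Γ' : C => (Γ' : Subalgebra k (M × A))) :=
      directedOn_iff_directed.mp hchain.directedOn
    rw [sSup_eq_iSup'] at hz
    have hz2 : z ∈ (⋃ (Γ' : C), ((Γ' : Subalgebra k (M × A)) : Set (M × A))) := by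
      rw [← Subalgebra.coe_iSup_of_directed hdir]
      exact hz
    obtain ⟨Γ', hΓ'⟩ := Set.mem_iUnion.mp hz2
    exact ((hCS Γ'.2).2) z hΓ') Γ₀ hΓ₀S
  have hS1 : Γ₀ ≤ Γ := hΓmax.1.1
  have hS2 : ∀ z ∈ Γ, (z.1 = (0 : M) → z.2 = 0) ∧ cu z.2 = b z.1 := hΓmax.1.2
  -- uniqueness in the graph
  have huniq : ∀ {x : M} {a a' : A}, (x, a) ∈ Γ → (x, a') ∈ Γ → a = a' := by
    intro x a a' h h'
    have hsub : (((x, a) : M × A) - (x, a')) ∈ Γ := sub_mem h h'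
    have h0 : ((0 : M), a - a') ∈ Γ := by
      simpa [Prod.mk_sub_mk] using hsub
    have := (hS2 _ h0).1 rfl
    exact sub_eq_zero.mp this
  -- first projection of Γ
  set FA : Subalgebra k M := Γ.map (AlgHom.fst k M A) with hFAdef
  have mem_FA : ∀ x : M, x ∈ FA ↔ ∃ a : A, (x, a) ∈ Γ := by
    intro x
    constructor
    · rintro ⟨z, hz, rfl⟩
      exact ⟨z.2, hz⟩
    · rintro ⟨a, ha⟩
      exact ⟨(x, a), ha, rfl⟩
  have hppow : ∀ n : M, ((n ^ p : M), (b n ^ p) ⊗ₜ[k] (1 : B)) ∈ Γ := fun n => hS1 (hp0 n)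
  have hinv : ∀ x ∈ FA, x⁻¹ ∈ FA := by
    intro x hx
    rcases eq_or_ne x 0 with rfl | hx0
    · simpa [inv_zero] using hx
    obtain ⟨a, ha⟩ := (mem_FA x).mp hx
    have hpowmk : (((x, a) : M × A)) ^ (p - 1) = (x ^ (p - 1), a ^ (p - 1)) := by
      ext <;> simp
    have hpow : ((x ^ (p - 1) : M), a ^ (p - 1)) ∈ Γ := by
      rw [← hpowmk]; exact pow_mem ha (p - 1)
    have hmul := mul_mem hpow (hppow x⁻¹)
    have hxinv : x ^ (p - 1) * (x⁻¹) ^ p = x⁻¹ := by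
      have hp1 : x ^ p = x ^ (p - 1) * x := by
        rw [← pow_succ, Nat.sub_add_cancel (Nat.Prime.one_lt (Fact.out : p.Prime)).le]
      rw [inv_pow, hp1]
      field_simp
    rw [mem_FA]
    have hmul' : ((x ^ (p - 1) * x⁻¹ ^ p : M),
        a ^ (p - 1) * ((b x⁻¹ ^ p) ⊗ₜ[k] (1 : B))) ∈ Γ := by
      simpa using hmul
    rw [hxinv] at hmul'
    exact ⟨_, hmul'⟩
  -- totality of the maximal graph
  have htot : ∀ x : M, x ∈ FA := by
    by_contra hcon
    push_neg at hcon
    obtain ⟨m, hm⟩ := hcon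
    set FF : IntermediateField k M := FA.toIntermediateField hinv with hFFdef
    have hex : ∀ x : FF, ∃ a : A, ((x : M), a) ∈ Γ := fun x => (mem_FA _).mp x.2
    choose φf hφf using hex
    have φ_spec : ∀ (x : FF) (a : A), ((x : M), a) ∈ Γ → φf x = a := fun x a ha =>
      huniq (hφf x) ha
    let φ : FF →ₐ[k] A :=
      { toFun := φf
        map_one' := φ_spec 1 1 (by exact one_mem Γ)
        map_mul' := fun x y => φ_spec (x * y) (φf x * φf y) (by
          simpa using mul_mem (hφf x) (hφf y))
        map_zero' := φ_spec 0 0 (by exact zero_mem Γ)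
        map_add' := fun x y => φ_spec (x + y) (φf x + φf y) (by
          simpa using add_mem (hφf x) (hφf y))
        commutes' := fun r => φ_spec (algebraMap k FF r) (algebraMap k A r) (by
          simpa using Γ.algebraMap_mem r) }
    have hφcu : ∀ x : FF, cu (φf x) = b (x : M) := fun x => (hS2 _ (hφf x)).2
    have hmFF : m ∉ FF := hm
    have hmpFF : (m ^ p : M) ∈ FF := (mem_FA _).mpr ⟨_, hppow m⟩
    haveI : CharP M p := charP_of_injective_algebraMap' k p
    set mp : FF := ⟨m ^ p, hmpFF⟩ with hmpdef
    set q : Polynomial FF := Polynomial.X ^ p - Polynomial.C mp with hqdef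
    have hmono : q.Monic := Polynomial.monic_X_pow_sub_C _ (Nat.Prime.ne_zero Fact.out)
    have hroot : Polynomial.aeval m q = 0 := by
      rw [hqdef, map_sub, map_pow, Polynomial.aeval_X, Polynomial.aeval_C]
      have : algebraMap FF M mp = m ^ p := rfl
      rw [this, sub_self]
    have hirr : Irreducible q :=
      X_pow_sub_C_irreducible_of_prime (Fact.out : p.Prime) (by
        intro r hr
        apply hmFF
        have h1 : ((r : M)) ^ p = m ^ p := by
          have := congrArg (algebraMap FF M) hr
          simpa [map_pow] using this
        have h2 : ((r : M) - m) ^ p = 0 := by rw [sub_pow_char, h1, sub_self]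
        have h3 : (r : M) - m = 0 :=
          pow_eq_zero_iff (Nat.Prime.ne_zero (Fact.out : p.Prime)) |>.mp h2
        have hrm : (r : M) = m := sub_eq_zero.mp h3
        rw [← hrm]
        exact r.2)
    have hint : IsIntegral FF m := ⟨q, hmono, hroot⟩
    have hminq : minpoly FF m = q := (minpoly.eq_of_irreducible_of_monic hirr hroot hmono).symm
    letI : Algebra FF A := φ.toRingHom.toAlgebra
    haveI : IsScalarTower k FF A :=
      IsScalarTower.of_algebraMap_eq fun r => (φ.commutes r).symm
    set pb := IntermediateField.adjoin.powerBasis hint with hpbdef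
    set y : A := (b m) ⊗ₜ[k] (1 : B) with hydef
    have hy : Polynomial.aeval y (minpoly FF pb.gen) = 0 := by
      rw [hpbdef, IntermediateField.adjoin.powerBasis_gen, IntermediateField.minpoly_gen,
        hminq, hqdef, map_sub, map_pow, Polynomial.aeval_X, Polynomial.aeval_C]
      have h1 : y ^ p = (b m ^ p) ⊗ₜ[k] (1 : B) := by
        rw [hydef, Algebra.TensorProduct.tmul_pow, one_pow]
      have h2 : algebraMap FF A mp = (b m ^ p) ⊗ₜ[k] (1 : B) :=
        φ_spec mp _ (hppow m)
      rw [h1, h2, sub_self]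
    set ext0 := pb.lift y hy with hext0def
    have hgen : ext0 pb.gen = y := pb.lift_gen y hy
    set ρ : _ →ₐ[k] M × A :=
      AlgHom.prod ((IntermediateField.adjoin FF {m}).val.restrictScalars k)
        (ext0.restrictScalars k) with hρdef
    set Γ' : Subalgebra k (M × A) := ρ.range with hΓ'def
    have hΓsub : Γ ≤ Γ' := by
      rintro ⟨x, a⟩ hza
      have hxFF : x ∈ FF := (mem_FA x).mpr ⟨a, hza⟩
      refine ⟨algebraMap FF _ (⟨x, hxFF⟩ : FF), ?_⟩
      have hfst : ((IntermediateField.adjoin FF {m}).val)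
          (algebraMap FF _ (⟨x, hxFF⟩ : FF)) = x := by
        rw [AlgHom.commutes]
        rfl
      have hsnd : ext0 (algebraMap FF _ (⟨x, hxFF⟩ : FF)) = a := by
        rw [AlgHom.commutes]
        exact φ_spec _ a hza
      exact Prod.ext hfst hsnd
    -- counit compatibility on the extension
    have hcuext : ∀ u : IntermediateField.adjoin FF {m}, cu (ext0 u) = b ((u : M)) := by
      letI : Algebra FF L := (b.toRingHom.comp (algebraMap FF M)).toAlgebra
      let h₁ : ↥(IntermediateField.adjoin FF {m}) →ₐ[FF] L :=
        { toRingHom := cu.toRingHom.comp ext0.toRingHom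
          commutes' := fun f => by
            show cu (ext0 (algebraMap FF _ f)) = b (algebraMap FF M f)
            rw [AlgHom.commutes]
            exact hφcu f }
      let h₂ : ↥(IntermediateField.adjoin FF {m}) →ₐ[FF] L :=
        { toRingHom := b.toRingHom.comp (IntermediateField.adjoin FF {m}).val.toRingHom
          commutes' := fun f => by
            show b (((IntermediateField.adjoin FF {m}).val) (algebraMap FF _ f))
              = b (algebraMap FF M f)
            rw [AlgHom.commutes] }
      have heq : h₁ = h₂ := pb.algHom_ext (by
        show cu (ext0 pb.gen) = b ((pb.gen : M))
        have hgenc : ((pb.gen : ↥(IntermediateField.adjoin FF {m})) : M) = m := by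
          rw [hpbdef, IntermediateField.adjoin.powerBasis_gen]
          rfl
        rw [hgen, hydef, hgenc, hcu, BOp.counit_tmul π L (b m) 1, map_one, one_smul])
      intro u
      exact AlgHom.congr_fun heq u
    have hΓ'S : Γ' ∈ S := by
      refine ⟨le_trans hS1 hΓsub, ?_⟩
      rintro z ⟨u, rfl⟩
      constructor
      · intro h0
        have hu : u = 0 := by
          apply Subtype.coe_injective
          exact h0
        rw [hu]
        show ((0 : M), ext0 0).2 = 0
        simp
      · exact hcuext u
    have hle : Γ' ≤ Γ := hΓmax.2 hΓ'S hΓsub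
    have hmem : ((m : M), ext0 (IntermediateField.AdjoinSimple.gen FF m)) ∈ Γ' := by
      exact ⟨IntermediateField.AdjoinSimple.gen FF m, rfl⟩
    exact hm ((mem_FA m).mpr ⟨_, hle hmem⟩)
  -- assemble the total homomorphism
  have hexM : ∀ x : M, ∃ a : A, (x, a) ∈ Γ := fun x => (mem_FA x).mp (htot x)
  choose ψ hψ using hexM
  have ψ_spec : ∀ (x : M) (a : A), (x, a) ∈ Γ → ψ x = a := fun x a ha => huniq (hψ x) ha
  refine ⟨{ toFun := ψ
            map_one' := ψ_spec 1 1 (by exact one_mem Γ)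
            map_mul' := fun x x' => ψ_spec (x * x') (ψ x * ψ x') (by
              simpa using mul_mem (hψ x) (hψ x'))
            map_zero' := ψ_spec 0 0 (by exact zero_mem Γ)
            map_add' := fun x x' => ψ_spec (x + x') (ψ x + ψ x') (by
              simpa using add_mem (hψ x) (hψ x'))
            commutes' := fun r => ψ_spec (algebraMap k M r) (algebraMap k A r) (by
              simpa using Γ.algebraMap_mem r) }, ?_, ?_⟩
  · apply AlgHom.ext
    intro x
    show ψ (algebraMap K M x) = δ x
    exact ψ_spec _ _ (hS1 (hK0 x))
  · apply AlgHom.ext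
    intro x
    show cu (ψ x) = b x
    exact (hS2 _ (hψ x)).2
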